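/- Let 1 ≤ k < N and let S₁, S₂ be k-dimensional linear subspaces of ℝ^N with orthogonal complements S₁ᗮ, S₂ᗮ (of dimension N − k). Then: (i) for any orthonormal bases of the four subspaces, |det(⟨orthonormal basis of S₁, orthonormal basis of S₂⟩)| = |det(⟨orthonormal basis of S₁ᗮ, orthonormal basis of S₂ᗮ⟩)|, i.e. the absolute Gram determinant of S₁ and S₂ equals that of S₁ᗮ and S₂ᗮ; (ii) consequently, if S₁ and S₂ are S-orthogonal (dim(S₁ ∩ S₂) = k − 1 and the Gram determinant of S₁, S₂ vanishes), then S₁ᗮ and S₂ᗮ are S-orthogonal (dim(S₁ᗮ ∩ S₂ᗮ) = N − k − 1 and the Gram determinant of S₁ᗮ, S₂ᗮ vanishes). -/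

import Mathlib

noncomputable section

open Module Matrix

/-- The Gram determinant `det(⟨e_i, f_j⟩)` of two `k`-tuples of vectors. -/
def gramDet {k N : ℕ} (e f : Fin k → EuclideanSpace ℝ (Fin N)) : ℝ :=
  (Matrix.of fun i j => (inner ℝ (e i) (f j) : ℝ)).det

lemma parseval_pair {N k : ℕ} (hkN : k ≤ N)
    (S : Submodule ℝ (EuclideanSpace ℝ (Fin N)))
    (e : Fin k → EuclideanSpace ℝ (Fin N))
    (e' : Fin (N - k) → EuclideanSpace ℝ (Fin N))
    (he : Orthonormal ℝ e) (he' : Orthonormal ℝ e')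
    (heS : S = Submodule.span ℝ (Set.range e))
    (heS' : Sᗮ = Submodule.span ℝ (Set.range e'))
    (x y : EuclideanSpace ℝ (Fin N)) :
    (∑ i, (inner ℝ x (e i) : ℝ) * inner ℝ (e i) y)
      + ∑ j, (inner ℝ x (e' j) : ℝ) * inner ℝ (e' j) y = inner ℝ x y := by
  set g : Fin k ⊕ Fin (N - k) → EuclideanSpace ℝ (Fin N) := Sum.elim e e' with hg
  have hcross : ∀ i j, (inner ℝ (e i) (e' j) : ℝ) = 0 := by
    intro i j
    have h1 : e i ∈ S := heS.ge (Submodule.subset_span (Set.mem_range_self i))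
    have h2 : e' j ∈ Sᗮ := heS'.ge (Submodule.subset_span (Set.mem_range_self j))
    exact Submodule.inner_right_of_mem_orthogonal h1 h2
  have hog : Orthonormal ℝ g := by
    rw [orthonormal_iff_ite] at he he' ⊢
    rintro (i | i) (j | j)
    · simpa [hg] using he i j
    · show (inner ℝ (e i) (e' j) : ℝ) = _
      rw [if_neg (by simp)]; exact hcross i j
    · show (inner ℝ (e' i) (e j) : ℝ) = _
      rw [if_neg (by simp), real_inner_comm]; exact hcross j i
    · simpa [hg] using he' i j
  have hspan : Submodule.span ℝ (Set.range g) = ⊤ := by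
    rw [hg, Set.Sum.elim_range, Submodule.span_union, ← heS, ← heS']
    exact Submodule.sup_orthogonal_of_hasOrthogonalProjection
  let b : Basis (Fin k ⊕ Fin (N - k)) ℝ (EuclideanSpace ℝ (Fin N)) :=
    Basis.mk hog.linearIndependent (by rw [hspan])
  have hb : ⇑b = g := Basis.coe_mk _ _
  let ob : OrthonormalBasis (Fin k ⊕ Fin (N - k)) ℝ (EuclideanSpace ℝ (Fin N)) :=
    b.toOrthonormalBasis (by rwa [hb])
  have hob : ⇑ob = g := by
    rw [show ⇑ob = ⇑b from Basis.coe_toOrthonormalBasis _ _, hb]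
  have := ob.sum_inner_mul_inner x y
  rw [Fintype.sum_sum_type] at this
  simpa [hob, hg] using this

/-- **Hodge duality for Gram determinants and S-orthogonality**: for `k`-dimensional
subspaces `S₁, S₂ ⊆ ℝ^N` with orthonormal bases `e, f`, and orthonormal bases `e', f'`
of the orthogonal complements `S₁ᗮ, S₂ᗮ`,
(i) `|det(⟨e_i, f_j⟩)| = |det(⟨e'_i, f'_j⟩)|`; and
(ii) if `S₁, S₂` are S-orthogonal (`dim(S₁ ∩ S₂) = k − 1` and the Gram determinant
vanishes), then `S₁ᗮ, S₂ᗮ` are S-orthogonal. -/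
theorem gramDet_orthogonal_complement {N k : ℕ} (hk : 1 ≤ k) (hkN : k < N)
    (S₁ S₂ : Submodule ℝ (EuclideanSpace ℝ (Fin N)))
    (h₁ : finrank ℝ S₁ = k) (h₂ : finrank ℝ S₂ = k)
    (e f : Fin k → EuclideanSpace ℝ (Fin N))
    (he : Orthonormal ℝ e) (hf : Orthonormal ℝ f)
    (heS : S₁ = Submodule.span ℝ (Set.range e))
    (hfS : S₂ = Submodule.span ℝ (Set.range f))
    (e' f' : Fin (N - k) → EuclideanSpace ℝ (Fin N))
    (he' : Orthonormal ℝ e') (hf' : Orthonormal ℝ f')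
    (heS' : S₁ᗮ = Submodule.span ℝ (Set.range e'))
    (hfS' : S₂ᗮ = Submodule.span ℝ (Set.range f')) :
    |gramDet e f| = |gramDet e' f'| ∧
    ((finrank ℝ ↥(S₁ ⊓ S₂) = k - 1 ∧ gramDet e f = 0) →
      (finrank ℝ ↥(S₁ᗮ ⊓ S₂ᗮ) = N - k - 1 ∧ gramDet e' f' = 0)) := by
  set A := (Matrix.of fun i j => (inner ℝ (e i) (f j) : ℝ) :
    Matrix (Fin k) (Fin k) ℝ) with hA
  set C := (Matrix.of fun i j => (inner ℝ (e' i) (f j) : ℝ) :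
    Matrix (Fin (N - k)) (Fin k) ℝ) with hC
  set D := (Matrix.of fun i j => (inner ℝ (e' i) (f' j) : ℝ) :
    Matrix (Fin (N - k)) (Fin (N - k)) ℝ) with hD
  -- key identity 1 : Aᵀ * A + Cᵀ * C = 1
  have key1 : Aᵀ * A + Cᵀ * C = 1 := by
    ext i j
    have := parseval_pair hkN.le S₁ e e' he he' heS heS' (f i) (f j)
    simp only [Matrix.add_apply, Matrix.mul_apply, Matrix.transpose_apply, hA, hC,
      Matrix.of_apply, Matrix.one_apply]
    rw [orthonormal_iff_ite] at hf
    calc (∑ l, (inner ℝ (e l) (f i) : ℝ) * inner ℝ (e l) (f j))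
          + ∑ l, (inner ℝ (e' l) (f i) : ℝ) * inner ℝ (e' l) (f j)
        = (∑ l, (inner ℝ (f i) (e l) : ℝ) * inner ℝ (e l) (f j))
          + ∑ l, (inner ℝ (f i) (e' l) : ℝ) * inner ℝ (e' l) (f j) := by
          simp only [← real_inner_comm (f i)]
      _ = inner ℝ (f i) (f j) := this
      _ = if i = j then 1 else 0 := hf i j
  -- key identity 2 : C * Cᵀ + D * Dᵀ = 1
  have key2 : C * Cᵀ + D * Dᵀ = 1 := by
    ext i j
    have := parseval_pair hkN.le S₂ f f' hf hf' hfS hfS' (e' i) (e' j)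
    simp only [Matrix.add_apply, Matrix.mul_apply, Matrix.transpose_apply, hC, hD,
      Matrix.of_apply, Matrix.one_apply]
    rw [orthonormal_iff_ite] at he'
    calc (∑ l, (inner ℝ (e' i) (f l) : ℝ) * inner ℝ (e' j) (f l))
          + ∑ l, (inner ℝ (e' i) (f' l) : ℝ) * inner ℝ (e' j) (f' l)
        = (∑ l, (inner ℝ (e' i) (f l) : ℝ) * inner ℝ (f l) (e' j))
          + ∑ l, (inner ℝ (e' i) (f' l) : ℝ) * inner ℝ (f' l) (e' j) := by
          simp only [real_inner_comm (e' j)]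
      _ = inner ℝ (e' i) (e' j) := this
      _ = if i = j then 1 else 0 := he' i j
  have hAA : Aᵀ * A = 1 - Cᵀ * C := eq_sub_of_add_eq key1
  have hDD : D * Dᵀ = 1 - C * Cᵀ := eq_sub_of_add_eq' key2
  have hdetA : A.det ^ 2 = (1 - Cᵀ * C).det := by
    rw [← hAA, Matrix.det_mul, Matrix.det_transpose, sq]
  have hdetD : D.det ^ 2 = (1 - C * Cᵀ).det := by
    rw [← hDD, Matrix.det_mul, Matrix.det_transpose, sq]
  have hsq : A.det ^ 2 = D.det ^ 2 := by
    rw [hdetA, hdetD, Matrix.det_one_sub_mul_comm]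
  have habs : |A.det| = |D.det| := by
    have h2 : |A.det| ^ 2 = |D.det| ^ 2 := by
      rw [sq_abs, sq_abs, hsq]
    nlinarith [abs_nonneg A.det, abs_nonneg D.det]
  have hgram : gramDet e f = A.det := rfl
  have hgram' : gramDet e' f' = D.det := rfl
  refine ⟨by rw [hgram, hgram']; exact habs, ?_⟩
  rintro ⟨hdim, hzero⟩
  constructor
  · have hsup : finrank ℝ ↥(S₁ ⊔ S₂) + finrank ℝ ↥(S₁ ⊓ S₂) = k + k := by
      rw [Submodule.finrank_sup_add_finrank_inf_eq, h₁, h₂]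
    have hsup' : finrank ℝ ↥(S₁ ⊔ S₂) = k + 1 := by omega
    have horto : S₁ᗮ ⊓ S₂ᗮ = (S₁ ⊔ S₂)ᗮ := Submodule.inf_orthogonal S₁ S₂
    have htot : finrank ℝ ↥(S₁ ⊔ S₂) + finrank ℝ ↥(S₁ ⊔ S₂)ᗮ
        = finrank ℝ (EuclideanSpace ℝ (Fin N)) :=
      Submodule.finrank_add_finrank_orthogonal _
    rw [finrank_euclideanSpace_fin, hsup'] at htot
    rw [horto]
    -- need k + 1 ≤ N
    have hle : k + 1 + finrank ℝ ↥(S₁ ⊔ S₂)ᗮ = N := htot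
    omega
  · have : |gramDet e' f'| = 0 := by
      rw [← (by rw [hgram, hgram']; exact habs : |gramDet e f| = |gramDet e' f'|), hzero, abs_zero]
    exact abs_eq_zero.mp this
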